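/- Let G be a Hausdorff topological group, U a symmetric open neighborhood of the identity, and 𝓤 a uniformity on G inducing the topology of G such that the multiplication map (x,y) ↦ x·y : U²×U² → G is uniformly continuous with respect to 𝓤. Then the uniform structures induced on the subset U by 𝓤, by the left uniformity 𝓤_l, and by the right uniformity 𝓤_r all coincide; equivalently, the filters 𝓤 ⊓ 𝓟(U ×ˢ U), 𝓤_l ⊓ 𝓟(U ×ˢ U) and 𝓤_r ⊓ 𝓟(U ×ˢ U) on G × G are equal. -/

import Mathlib

open Filter Set Topology Pointwise

/-- The left uniformity filter of a topological group. -/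
def leftUF (G : Type*) [Group G] [TopologicalSpace G] : Filter (G × G) :=
  Filter.comap (fun p : G × G => p.1⁻¹ * p.2) (nhds 1)

/-- The right uniformity filter of a topological group. -/
def rightUF (G : Type*) [Group G] [TopologicalSpace G] : Filter (G × G) :=
  Filter.comap (fun p : G × G => p.1 * p.2⁻¹) (nhds 1)

/-- The product of a uniformity-like filter on `G × G` with itself, as a filter on
`(G × G) × (G × G)`; this agrees with the product uniformity when the filter is a uniformity. -/
def prodUF {G : Type*} (F : Filter (G × G)) : Filter ((G × G) × (G × G)) :=
  Filter.comap (fun q : (G × G) × (G × G) => (q.1.1, q.2.1)) F ⊓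
    Filter.comap (fun q : (G × G) × (G × G) => (q.1.2, q.2.2)) F

/-- Multiplication is uniformly continuous on the set `s ⊆ G × G` with respect to the
uniformity-like filter `F` on `G × G`. -/
def MulUCOn {G : Type*} [Mul G] (F : Filter (G × G)) (s : Set (G × G)) : Prop :=
  Filter.Tendsto (fun q : (G × G) × (G × G) => (q.1.1 * q.1.2, q.2.1 * q.2.2))
    (prodUF F ⊓ 𝓟 (s ×ˢ s)) F

lemma aux_le {α : Type*} {A B : Filter α} {p : Set α}
    (h : ∀ s ∈ B, ∃ t ∈ A, t ∩ p ⊆ s) : A ⊓ 𝓟 p ≤ B ⊓ 𝓟 p := by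
  refine le_inf (fun s hs => ?_) inf_le_right
  obtain ⟨t, ht, hsub⟩ := h s hs
  exact Filter.mem_of_superset (inter_mem_inf ht (mem_principal_self p)) hsub

lemma keyUC {G : Type*} [Mul G] {F : Filter (G × G)} {s : Set (G × G)}
    (h : MulUCOn F s) {V : Set (G × G)} (hV : V ∈ F) :
    ∃ V' ∈ F, ∀ a b c d : G, (a, c) ∈ V' → (b, d) ∈ V' →
      (a, b) ∈ s → (c, d) ∈ s → (a * b, c * d) ∈ V := by
  have h1 := h hV
  rw [Filter.mem_map, Filter.mem_inf_iff_superset] at h1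
  obtain ⟨t₁, ht₁, t₂, ht₂, hsub⟩ := h1
  rw [prodUF, Filter.mem_inf_iff_superset] at ht₁
  obtain ⟨w₁, hw₁, w₂, hw₂, hsub₁⟩ := ht₁
  rw [Filter.mem_comap] at hw₁ hw₂
  obtain ⟨W₁, hW₁, hW₁s⟩ := hw₁
  obtain ⟨W₂, hW₂, hW₂s⟩ := hw₂
  rw [Filter.mem_principal] at ht₂
  refine ⟨W₁ ∩ W₂, inter_mem hW₁ hW₂, fun a b c d hac hbd hab hcd => ?_⟩
  have hq : ((a, b), (c, d)) ∈ t₁ := hsub₁ ⟨hW₁s hac.1, hW₂s hbd.2⟩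
  exact hsub ⟨hq, ht₂ (Set.mk_mem_prod hab hcd)⟩

theorem stmt_0 {G : Type*} [Group G] [TopologicalSpace G] [IsTopologicalGroup G] [T2Space G]
    (U : Set G) (hUo : IsOpen U) (hU1 : (1 : G) ∈ U) (hUs : U⁻¹ = U)
    (u : UniformSpace G) (hu : u.toTopologicalSpace = ‹TopologicalSpace G›)
    (hmul : MulUCOn (@uniformity G u) ((U ^ 2) ×ˢ (U ^ 2))) :
    @uniformity G u ⊓ 𝓟 (U ×ˢ U) = leftUF G ⊓ 𝓟 (U ×ˢ U) ∧
      @uniformity G u ⊓ 𝓟 (U ×ˢ U) = rightUF G ⊓ 𝓟 (U ×ˢ U) := by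
  set 𝔘 : Filter (G × G) := @uniformity G u with h𝔘
  -- basic facts
  have hnhds : (𝓝 (1 : G)) = Filter.comap (Prod.mk (1 : G)) 𝔘 := by
    conv_lhs => rw [← hu]
    exact @nhds_eq_comap_uniformity G u 1
  have hrefl : ∀ V ∈ 𝔘, ∀ a : G, (a, a) ∈ V := fun V hV a => @refl_mem_uniformity G u _ _ hV
  have hswap : ∀ V ∈ 𝔘, Prod.swap ⁻¹' V ∈ 𝔘 := fun V hV => (@tendsto_swap_uniformity G u) hV
  have hball : ∀ V ∈ 𝔘, {z : G | (1, z) ∈ V} ∈ 𝓝 (1 : G) := by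
    intro V hV; rw [hnhds]; exact Filter.preimage_mem_comap hV
  have hballrev : ∀ W ∈ 𝓝 (1 : G), ∃ V ∈ 𝔘, ∀ z : G, (1, z) ∈ V → z ∈ W := by
    intro W hW
    rw [hnhds, Filter.mem_comap] at hW
    obtain ⟨V, hV, hVs⟩ := hW
    exact ⟨V, hV, fun z hz => hVs hz⟩
  have hU2 : U ⊆ U ^ 2 := fun x hx => by
    rw [pow_two]; exact ⟨x, hx, 1, hU1, mul_one x⟩
  have h1U2 : (1 : G) ∈ U ^ 2 := hU2 hU1
  have hinv : ∀ x ∈ U, x⁻¹ ∈ U := fun x hx => by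
    rw [← hUs]; exact Set.inv_mem_inv.mpr hx
  constructor
  · apply le_antisymm
    · -- 𝔘 ⊓ 𝓟 ≤ leftUF ⊓ 𝓟
      apply aux_le
      intro t ht
      rw [leftUF, Filter.mem_comap] at ht
      obtain ⟨W, hW, hWt⟩ := ht
      obtain ⟨V, hV, hVW⟩ := hballrev W hW
      obtain ⟨V', hV', hkey⟩ := keyUC hmul hV
      refine ⟨V', hV', fun p hp => ?_⟩
      obtain ⟨hpV, hpU⟩ := hp
      obtain ⟨x, y⟩ := p
      have hx : x ∈ U := hpU.1
      have hy : y ∈ U := hpU.2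
      have := hkey x⁻¹ x x⁻¹ y (hrefl _ hV' x⁻¹) hpV
        ⟨hU2 (hinv x hx), hU2 hx⟩ ⟨hU2 (hinv x hx), hU2 hy⟩
      rw [inv_mul_cancel] at this
      exact hWt (hVW _ this)
    · -- leftUF ⊓ 𝓟 ≤ 𝔘 ⊓ 𝓟
      apply aux_le
      intro V hV
      obtain ⟨V', hV', hkey⟩ := keyUC hmul hV
      have hW : ({z : G | (1, z) ∈ V'} ∩ U) ∈ 𝓝 (1 : G) :=
        inter_mem (hball V' hV') (hUo.mem_nhds hU1)
      refine ⟨(fun p : G × G => p.1⁻¹ * p.2) ⁻¹' ({z : G | (1, z) ∈ V'} ∩ U),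
        Filter.preimage_mem_comap hW, fun p hp => ?_⟩
      obtain ⟨⟨hpV', hpU'⟩, hpU⟩ := hp
      obtain ⟨x, y⟩ := p
      have hx : x ∈ U := hpU.1
      have := hkey x 1 x (x⁻¹ * y) (hrefl _ hV' x) hpV'
        ⟨hU2 hx, h1U2⟩ ⟨hU2 hx, hU2 hpU'⟩
      simpa using this
  · apply le_antisymm
    · -- 𝔘 ⊓ 𝓟 ≤ rightUF ⊓ 𝓟
      apply aux_le
      intro t ht
      rw [rightUF, Filter.mem_comap] at ht
      obtain ⟨W, hW, hWt⟩ := ht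
      obtain ⟨V₀, hV₀, hV₀W⟩ := hballrev W hW
      -- symmetric version of V₀
      have hVs : Prod.swap ⁻¹' V₀ ∈ 𝔘 := hswap V₀ hV₀
      obtain ⟨V', hV', hkey⟩ := keyUC hmul hVs
      refine ⟨V', hV', fun p hp => ?_⟩
      obtain ⟨hpV, hpU⟩ := hp
      obtain ⟨x, y⟩ := p
      have hx : x ∈ U := hpU.1
      have hy : y ∈ U := hpU.2
      have := hkey x y⁻¹ y y⁻¹ hpV (hrefl _ hV' y⁻¹)
        ⟨hU2 hx, hU2 (hinv y hy)⟩ ⟨hU2 hy, hU2 (hinv y hy)⟩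
      rw [mul_inv_cancel] at this
      exact hWt (hV₀W _ this)
    · -- rightUF ⊓ 𝓟 ≤ 𝔘 ⊓ 𝓟
      apply aux_le
      intro V hV
      obtain ⟨V', hV', hkey⟩ := keyUC hmul hV
      have hV'' : V' ∩ Prod.swap ⁻¹' V' ∈ 𝔘 := inter_mem hV' (hswap V' hV')
      have hW : ({z : G | (1, z) ∈ V' ∩ Prod.swap ⁻¹' V'} ∩ U) ∈ 𝓝 (1 : G) :=
        inter_mem (hball _ hV'') (hUo.mem_nhds hU1)
      refine ⟨(fun p : G × G => p.1 * p.2⁻¹) ⁻¹' ({z : G | (1, z) ∈ V' ∩ Prod.swap ⁻¹' V'} ∩ U),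
        Filter.preimage_mem_comap hW, fun p hp => ?_⟩
      obtain ⟨⟨⟨_, hpV'⟩, hpU'⟩, hpU⟩ := hp
      obtain ⟨x, y⟩ := p
      have hy : y ∈ U := hpU.2
      have := hkey (x * y⁻¹) y 1 y hpV' (hrefl _ hV' y)
        ⟨hU2 hpU', hU2 hy⟩ ⟨h1U2, hU2 hy⟩
      simpa using this
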